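/- For all positive integers n and 0 ≤ i ≤ n, the polynomial ∑ t^{exc(π)}, summed over even (resp. odd) permutations of S_n with exactly i fixed points, is gamma positive with center of symmetry (n-i)/2. -/

import Mathlib

open Finset Polynomial

/-- Number of excedances of a permutation of `{0,…,n-1}`. -/
def excA {n : ℕ} (π : Equiv.Perm (Fin n)) : ℕ :=
  (Finset.univ.filter (fun i => i < π i)).card

/-- Number of inversions. -/
def invA {n : ℕ} (π : Equiv.Perm (Fin n)) : ℕ :=
  (Finset.univ.filter (fun p : Fin n × Fin n => p.1 < p.2 ∧ π p.2 < π p.1)).card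

/-- Number of fixed points. -/
def fixA {n : ℕ} (π : Equiv.Perm (Fin n)) : ℕ :=
  (Finset.univ.filter (fun j => π j = j)).card

/-- `f` is gamma positive with parameters `r ≤ N`: it has an expansion
`f = ∑ γ_i t^{r+i}(1+t)^{N-r-2i}` with `γ_i ≥ 0`; its center of symmetry is `(N+r)/2`. -/
def IsGammaPos (f : Polynomial ℚ) (r N : ℕ) : Prop :=
  r ≤ N ∧ ∃ γ : ℕ → ℚ, (∀ i, 0 ≤ γ i) ∧
    f = ∑ i ∈ Finset.range ((N - r) / 2 + 1),
      Polynomial.C (γ i) * Polynomial.X ^ (r + i) * (1 + Polynomial.X) ^ (N - r - 2 * i)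

/-- `f` is gamma positive with center of symmetry `c/2` (in half-integral units). -/
def GammaPosCenter (f : Polynomial ℚ) (c : ℕ) : Prop :=
  ∃ r N : ℕ, N + r = c ∧ IsGammaPos f r N

namespace Aux19

open Equiv

variable {n : ℕ}

lemma excA_eq_sum {N : ℕ} (π : Perm (Fin N)) :
    excA π = ∑ x : Fin N, if x < π x then 1 else 0 := Finset.card_filter _ _

lemma fixA_eq_sum {N : ℕ} (π : Perm (Fin N)) :
    fixA π = ∑ x : Fin N, if π x = x then 1 else 0 := Finset.card_filter _ _

lemma fixA_le {N : ℕ} (π : Perm (Fin N)) : fixA π ≤ N :=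
  (Finset.card_filter_le _ _).trans (by simp)

lemma exc_add_fix_le {N : ℕ} (π : Perm (Fin N)) : excA π + fixA π ≤ N := by
  rw [excA_eq_sum, fixA_eq_sum, ← Finset.sum_add_distrib]
  calc ∑ x : Fin N, ((if x < π x then 1 else 0) + (if π x = x then 1 else 0))
      ≤ ∑ _x : Fin N, 1 := by
        refine Finset.sum_le_sum fun x _ => ?_
        by_cases h1 : x < π x
        · have h2 : ¬ π x = x := fun he => absurd (h1.trans_eq he) (lt_irrefl x)
          simp [h1, h2]
        · by_cases h2 : π x = x <;> simp [h1, h2]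
    _ = N := by simp

/-- Extend a permutation of `Fin n` to `Fin (n+1)` fixing `last`. -/
def ext (σ : Perm (Fin n)) : Perm (Fin (n + 1)) :=
  finSuccEquivLast.symm.permCongr σ.optionCongr

@[simp] lemma ext_castSucc (σ : Perm (Fin n)) (x : Fin n) :
    ext σ x.castSucc = (σ x).castSucc := by
  simp [ext, Equiv.optionCongr]

@[simp] lemma ext_last (σ : Perm (Fin n)) : ext σ (Fin.last n) = Fin.last n := by
  simp [ext, Equiv.optionCongr]

/-- Insert: `ins σ k = ext σ * swap k last`. -/
def ins (σ : Perm (Fin n)) (k : Fin (n + 1)) : Perm (Fin (n + 1)) :=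
  ext σ * Equiv.swap k (Fin.last n)

lemma ins_last (σ : Perm (Fin n)) : ins σ (Fin.last n) = ext σ := by
  simp [ins, Equiv.swap_self]; rfl

lemma ins_apply_castSucc (σ : Perm (Fin n)) (j x : Fin n) :
    ins σ j.castSucc x.castSucc = if x = j then Fin.last n else (σ x).castSucc := by
  rcases eq_or_ne x j with h | h
  · simp [ins, h, Equiv.Perm.mul_apply]
  · have h1 : x.castSucc ≠ j.castSucc := by simpa [Fin.castSucc_inj] using h
    have h2 : x.castSucc ≠ Fin.last n := (Fin.castSucc_lt_last x).ne
    simp [ins, Equiv.Perm.mul_apply, Equiv.swap_apply_of_ne_of_ne h1 h2, h]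

lemma ins_apply_last (σ : Perm (Fin n)) (j : Fin n) :
    ins σ j.castSucc (Fin.last n) = (σ j).castSucc := by
  simp [ins, Equiv.Perm.mul_apply]

lemma excA_ext (σ : Perm (Fin n)) : excA (ext σ) = excA σ := by
  rw [excA_eq_sum, Fin.sum_univ_castSucc, excA_eq_sum]
  simp [Fin.castSucc_lt_castSucc_iff]

lemma fixA_ext (σ : Perm (Fin n)) : fixA (ext σ) = fixA σ + 1 := by
  rw [fixA_eq_sum, Fin.sum_univ_castSucc, fixA_eq_sum]
  simp [Fin.castSucc_inj]

lemma excA_ins (σ : Perm (Fin n)) (j : Fin n) :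
    excA (ins σ j.castSucc) = if j < σ j then excA σ else excA σ + 1 := by
  have key : excA (ins σ j.castSucc)
      = ∑ x : Fin n, if x = j then 1 else (if x < σ x then 1 else 0) := by
    rw [excA_eq_sum, Fin.sum_univ_castSucc]
    have hlast : ¬ (Fin.last n < ins σ j.castSucc (Fin.last n)) := by
      rw [ins_apply_last]; exact not_lt.2 (Fin.le_last _)
    rw [if_neg hlast, add_zero]
    refine Finset.sum_congr rfl fun x _ => ?_
    rcases eq_or_ne x j with h | h
    · simp [ins_apply_castSucc, h, Fin.castSucc_lt_last]
    · simp [ins_apply_castSucc, h, Fin.castSucc_lt_castSucc_iff]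
  have h2 : ∑ x : Fin n, (if x = j then 1 else (if x < σ x then 1 else 0))
      = 1 + ∑ x ∈ Finset.univ.erase j, (if x < σ x then 1 else 0) := by
    rw [← Finset.add_sum_erase _ _ (Finset.mem_univ j)]
    congr 1
    · simp
    · exact Finset.sum_congr rfl fun x hx => if_neg (Finset.mem_erase.1 hx).1
  have h3 : excA σ = (if j < σ j then 1 else 0)
      + ∑ x ∈ Finset.univ.erase j, (if x < σ x then 1 else 0) := by
    rw [excA_eq_sum, ← Finset.add_sum_erase _ _ (Finset.mem_univ j)]
  rw [key, h2]
  split_ifs with h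
  · rw [h3, if_pos h]
  · rw [h3, if_neg h]; omega

lemma fixA_ins (σ : Perm (Fin n)) (j : Fin n) :
    fixA (ins σ j.castSucc) + (if σ j = j then 1 else 0) = fixA σ := by
  have key : fixA (ins σ j.castSucc)
      = ∑ x : Fin n, if x = j then 0 else (if σ x = x then 1 else 0) := by
    rw [fixA_eq_sum, Fin.sum_univ_castSucc]
    have hlast : ¬ (ins σ j.castSucc (Fin.last n) = Fin.last n) := by
      rw [ins_apply_last]; exact (Fin.castSucc_lt_last _).ne
    rw [if_neg hlast, add_zero]
    refine Finset.sum_congr rfl fun x _ => ?_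
    rcases eq_or_ne x j with h | h
    · simp [ins_apply_castSucc, h, (Fin.castSucc_lt_last j).ne']
    · simp [ins_apply_castSucc, h, Fin.castSucc_inj]
  have h2 : ∑ x : Fin n, (if x = j then 0 else (if σ x = x then 1 else 0))
      = ∑ x ∈ Finset.univ.erase j, (if σ x = x then 1 else 0) := by
    rw [← Finset.add_sum_erase Finset.univ
      (fun x => if x = j then 0 else (if σ x = x then (1:ℕ) else 0)) (Finset.mem_univ j),
      if_pos (rfl : j = j), zero_add]
    apply Finset.sum_congr rfl
    intro x hx
    exact if_neg (Finset.mem_erase.1 hx).1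
  have h3 : fixA σ = (if σ j = j then 1 else 0)
      + ∑ x ∈ Finset.univ.erase j, (if σ x = x then 1 else 0) := by
    rw [fixA_eq_sum, ← Finset.add_sum_erase _ _ (Finset.mem_univ j)]
  rw [key, h2, h3]; omega

lemma signAux_eq_pow {N : ℕ} (π : Perm (Fin N)) :
    Equiv.Perm.signAux π = (-1 : ℤˣ) ^ (invA π) := by
  have hcard : ((Equiv.Perm.finPairsLT N).filter (fun x => π x.1 ≤ π x.2)).card = invA π := by
    apply Finset.card_bij (fun x _ => ((x.2, x.1) : Fin N × Fin N))
    · intro x hx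
      rw [Finset.mem_filter] at hx
      have h1 : x.2 < x.1 := Equiv.Perm.mem_finPairsLT.1 hx.1
      have h2 : π x.1 < π x.2 :=
        lt_of_le_of_ne hx.2 (fun he => h1.ne' (π.injective he))
      simp [h1, h2]
    · intro x hx y hy h
      rw [Prod.ext_iff] at h
      exact Sigma.ext h.2 (heq_of_eq h.1)
    · intro p hp
      rw [Finset.mem_filter] at hp
      refine ⟨⟨p.2, p.1⟩, ?_, rfl⟩
      rw [Finset.mem_filter]
      exact ⟨Equiv.Perm.mem_finPairsLT.2 hp.2.1, hp.2.2.le⟩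
  calc Equiv.Perm.signAux π
      = ∏ x ∈ Equiv.Perm.finPairsLT N, (if π x.1 ≤ π x.2 then (-1 : ℤˣ) else 1) := rfl
    _ = (-1 : ℤˣ) ^ ((Equiv.Perm.finPairsLT N).filter (fun x => π x.1 ≤ π x.2)).card := by
        rw [Finset.prod_ite, Finset.prod_const, Finset.prod_const, one_pow, mul_one]
    _ = (-1 : ℤˣ) ^ (invA π) := by rw [hcard]

lemma invA_ext (σ : Perm (Fin n)) : invA (ext σ) = invA σ := by
  unfold invA
  symm
  apply Finset.card_bij
    (fun p _ => ((p.1.castSucc, p.2.castSucc) : Fin (n+1) × Fin (n+1)))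
  · intro p hp
    rw [Finset.mem_filter] at hp
    simp [Fin.castSucc_lt_castSucc_iff, hp.2.1, hp.2.2]
  · intro p hp q hq h
    rw [Prod.ext_iff] at h
    have h1 := Fin.castSucc_inj.1 h.1
    have h2 := Fin.castSucc_inj.1 h.2
    exact Prod.ext h1 h2
  · intro p hp
    rw [Finset.mem_filter] at hp
    obtain ⟨-, hlt, hinv⟩ := hp
    have h2 : p.2 ≠ Fin.last n := by
      intro he
      rw [he, ext_last] at hinv
      exact absurd hinv (not_lt.2 (Fin.le_last _))
    have h1 : p.1 ≠ Fin.last n := by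
      intro he
      rw [he] at hlt
      exact absurd (hlt.trans_le (Fin.le_last _)) (lt_irrefl _)
    obtain ⟨x, hx⟩ := Fin.exists_castSucc_eq.2 h1
    obtain ⟨y, hy⟩ := Fin.exists_castSucc_eq.2 h2
    refine ⟨(x, y), ?_, by simp [hx, hy]⟩
    rw [Finset.mem_filter]
    rw [← hx, ← hy] at hlt hinv
    rw [ext_castSucc, ext_castSucc] at hinv
    exact ⟨Finset.mem_univ _, Fin.castSucc_lt_castSucc_iff.1 hlt,
      Fin.castSucc_lt_castSucc_iff.1 hinv⟩

lemma even_invA_ins (σ : Perm (Fin n)) (j : Fin n) :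
    Even (invA (ins σ j.castSucc)) ↔ ¬ Even (invA σ) := by
  have h1 : Equiv.Perm.signAux (ins σ j.castSucc)
      = Equiv.Perm.signAux (ext σ) * Equiv.Perm.signAux (Equiv.swap j.castSucc (Fin.last n)) :=
    Equiv.Perm.signAux_mul _ _
  rw [Equiv.Perm.signAux_swap (Fin.castSucc_lt_last j).ne, signAux_eq_pow, signAux_eq_pow,
    invA_ext] at h1
  rcases Nat.even_or_odd (invA σ) with h | h
  · simp only [h, not_true, iff_false]
    intro hc
    rw [hc.neg_one_pow, h.neg_one_pow, one_mul] at h1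
    exact absurd h1 (by decide)
  · have hodd : ¬ Even (invA σ) := Nat.not_even_iff_odd.2 h
    simp only [hodd, not_false_iff, iff_true]
    by_contra hc
    rw [(Nat.not_even_iff_odd.1 hc).neg_one_pow, h.neg_one_pow] at h1
    exact absurd h1 (by decide)

lemma even_invA_ins_last (σ : Perm (Fin n)) :
    Even (invA (ins σ (Fin.last n))) ↔ Even (invA σ) := by
  rw [ins_last, invA_ext]

def unext (ρ : Perm (Fin (n + 1))) : Perm (Fin n) :=
  Equiv.removeNone (finSuccEquivLast.permCongr ρ)

lemma unext_ext (σ : Perm (Fin n)) : unext (ext σ) = σ := by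
  unfold unext ext
  rw [← Equiv.permCongr_symm, Equiv.apply_symm_apply, Equiv.removeNone_optionCongr]

lemma ext_unext {ρ : Perm (Fin (n + 1))} (h : ρ (Fin.last n) = Fin.last n) :
    ext (unext ρ) = ρ := by
  apply Equiv.ext
  intro z
  rcases eq_or_ne z (Fin.last n) with rfl | hz
  · rw [ext_last, h]
  · obtain ⟨x, rfl⟩ := Fin.exists_castSucc_eq.2 hz
    rw [ext_castSucc]
    have hne : ρ x.castSucc ≠ Fin.last n := by
      intro he
      exact (Fin.castSucc_lt_last x).ne (ρ.injective (he.trans h.symm))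
    obtain ⟨y, hy⟩ := Fin.exists_castSucc_eq.2 hne
    have he' : (finSuccEquivLast.permCongr ρ) (some x) = some y := by
      rw [Equiv.permCongr_apply]
      simp [← hy]
    have h2 := Equiv.removeNone_some (finSuccEquivLast.permCongr ρ) ⟨y, he'⟩
    rw [he'] at h2
    have hxy : unext ρ x = y := Option.some_injective _ h2
    rw [hxy, hy]

def Ψ : Perm (Fin n) × Fin (n + 1) ≃ Perm (Fin (n + 1)) where
  toFun p := ins p.1 p.2
  invFun π := (unext (π * Equiv.swap (π⁻¹ (Fin.last n)) (Fin.last n)), π⁻¹ (Fin.last n))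
  left_inv := by
    rintro ⟨σ, k⟩
    have hk : (ins σ k)⁻¹ (Fin.last n) = k := by
      rw [Equiv.Perm.inv_eq_iff_eq]
      simp [ins, Equiv.Perm.mul_apply]
    simp only [hk]
    have h2 : ins σ k * Equiv.swap k (Fin.last n) = ext σ := by
      rw [ins, mul_assoc, Equiv.swap_mul_self, mul_one]
    rw [h2, unext_ext]
  right_inv := by
    intro π
    have hfix : (π * Equiv.swap (π⁻¹ (Fin.last n)) (Fin.last n)) (Fin.last n) = Fin.last n := by
      rw [Equiv.Perm.mul_apply, Equiv.swap_apply_right, ← Equiv.Perm.mul_apply, mul_inv_cancel,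
        Equiv.Perm.one_apply]
    show ins (unext (π * Equiv.swap (π⁻¹ (Fin.last n)) (Fin.last n))) (π⁻¹ (Fin.last n)) = π
    rw [ins, ext_unext hfix, mul_assoc, Equiv.swap_mul_self, mul_one]

lemma partition_card (σ : Perm (Fin n)) :
    (Finset.univ.filter (fun j => ¬ σ j = j ∧ ¬ j < σ j)).card = n - fixA σ - excA σ := by
  have key : fixA σ + (excA σ +
      (Finset.univ.filter (fun j => ¬ σ j = j ∧ ¬ j < σ j)).card) = n := by
    unfold fixA excA
    rw [Finset.card_filter, Finset.card_filter, Finset.card_filter,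
      ← Finset.sum_add_distrib, ← Finset.sum_add_distrib]
    have h1 : ∀ j : Fin n, ((if σ j = j then 1 else 0) + ((if j < σ j then 1 else 0)
        + (if ¬ σ j = j ∧ ¬ j < σ j then 1 else 0))) = 1 := by
      intro j
      by_cases ha : σ j = j
      · have hb : ¬ j < σ j := fun hc => absurd (hc.trans_eq ha) (lt_irrefl j)
        simp [ha, hb]
      · by_cases hb : j < σ j <;> simp [ha, hb]
    rw [Finset.sum_congr rfl (fun j _ => h1 j)]
    simp
  omega

lemma sum_three (σ : Perm (Fin n)) (A B1 B2 : Polynomial ℚ) :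
    ∑ j : Fin n, (if σ j = j then A else if j < σ j then B1 else B2)
      = fixA σ • A + excA σ • B1 + (n - fixA σ - excA σ) • B2 := by
  rw [Finset.sum_ite]
  rw [Finset.sum_const, Finset.sum_ite, Finset.sum_const, Finset.sum_const]
  rw [Finset.filter_filter, Finset.filter_filter]
  have h1 : Finset.univ.filter (fun j => ¬ σ j = j ∧ j < σ j)
      = Finset.univ.filter (fun j => j < σ j) := by
    apply Finset.filter_congr
    intro j _
    constructor
    · exact fun h => h.2
    · exact fun h => ⟨fun he => absurd (h.trans_eq he) (lt_irrefl j), h⟩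
  rw [h1, partition_card, add_assoc]
  rfl

/-- The refined excedance polynomial: sum over permutations with inversion-parity `b`
(`true` = even) and `i` fixed points. -/
noncomputable def P (b : Bool) (N i : ℕ) : Polynomial ℚ :=
  ∑ π ∈ Finset.univ.filter
    (fun π : Perm (Fin N) => (Even (invA π) ↔ b = true) ∧ fixA π = i), X ^ excA π

lemma P_def' (b : Bool) (N i : ℕ) :
    P b N i = ∑ π : Perm (Fin N),
      if ((Even (invA π) ↔ b = true) ∧ fixA π = i) then X ^ excA π else 0 :=
  Finset.sum_filter _ _

lemma P_eq_zero {b : Bool} {N i : ℕ} (h : N < i) : P b N i = 0 := by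
  rw [P_def']
  apply Finset.sum_eq_zero
  intro π _
  have : ¬ fixA π = i := fun he => absurd (he ▸ fixA_le π) (not_le.2 h)
  simp [this]

/-- The operator `f ↦ t(1-t)f' + m t f`. -/
noncomputable def Tm (m : ℕ) (f : Polynomial ℚ) : Polynomial ℚ :=
  X * (1 - X) * derivative f + C (m : ℚ) * (X * f)

lemma Tm_zero (m : ℕ) : Tm m 0 = 0 := by simp [Tm]

lemma Tm_sum (m : ℕ) {α : Type*} (s : Finset α) (f : α → Polynomial ℚ) :
    Tm m (∑ x ∈ s, f x) = ∑ x ∈ s, Tm m (f x) := by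
  simp [Tm, derivative_sum, Finset.mul_sum, Finset.sum_add_distrib]

lemma Tm_pow (m e : ℕ) (he : e ≤ m) :
    Tm m ((X : Polynomial ℚ) ^ e) = e • (X:Polynomial ℚ) ^ e + (m - e) • (X:Polynomial ℚ) ^ (e+1) := by
  cases e with
  | zero => simp [Tm, nsmul_eq_mul, Polynomial.C_eq_natCast, pow_one]
  | succ e' =>
    rw [Tm, derivative_X_pow, nsmul_eq_mul, nsmul_eq_mul]
    simp only [Nat.add_sub_cancel, Polynomial.C_eq_natCast]
    have hc : ((m - (e'+1) : ℕ) : Polynomial ℚ) = (m : Polynomial ℚ) - ((e'+1 : ℕ) : Polynomial ℚ) :=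
      Nat.cast_sub he
    rw [hc]
    push_cast
    ring

lemma P_rec (b : Bool) (n i : ℕ) :
    P b (n+1) i = (if i = 0 then 0 else P b n (i-1))
      + C ((i : ℚ) + 1) * (X * P (!b) n (i+1))
      + Tm (n - i) (P (!b) n i) := by
  have hpar : ∀ (σ : Perm (Fin n)) (j : Fin n),
      ((Even (invA (ins σ j.castSucc)) ↔ b = true) ↔ (Even (invA σ) ↔ (!b) = true)) := by
    intro σ j
    have h3 := even_invA_ins σ j
    cases b <;> simp [h3, not_not]
  have step1 : P b (n+1) i = ∑ σ : Perm (Fin n), ∑ k : Fin (n+1),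
      (if ((Even (invA (ins σ k)) ↔ b = true) ∧ fixA (ins σ k) = i)
        then (X : Polynomial ℚ) ^ excA (ins σ k) else 0) := by
    rw [P_def', ← Equiv.sum_comp (Ψ (n := n))
      (fun π => if ((Even (invA π) ↔ b = true) ∧ fixA π = i)
        then (X : Polynomial ℚ) ^ excA π else 0), Fintype.sum_prod_type]
    rfl
  have step2 : ∀ σ : Perm (Fin n),
      (∑ k : Fin (n+1), (if ((Even (invA (ins σ k)) ↔ b = true) ∧ fixA (ins σ k) = i)
          then (X : Polynomial ℚ) ^ excA (ins σ k) else 0))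
      = (∑ j : Fin n, (if σ j = j
            then (if ((Even (invA σ) ↔ (!b) = true) ∧ fixA σ = i + 1)
              then (X : Polynomial ℚ) ^ (excA σ + 1) else 0)
            else if j < σ j
              then (if ((Even (invA σ) ↔ (!b) = true) ∧ fixA σ = i)
                then (X : Polynomial ℚ) ^ excA σ else 0)
              else (if ((Even (invA σ) ↔ (!b) = true) ∧ fixA σ = i)
                then (X : Polynomial ℚ) ^ (excA σ + 1) else 0)))
        + (if ((Even (invA σ) ↔ b = true) ∧ fixA σ + 1 = i)
            then (X : Polynomial ℚ) ^ excA σ else 0) := by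
    intro σ
    rw [Fin.sum_univ_castSucc]
    congr 1
    · apply Finset.sum_congr rfl
      intro j _
      by_cases hfj : σ j = j
      · have hfix := fixA_ins σ j
        rw [if_pos hfj] at hfix
        have hnl : ¬ j < σ j := fun hc => absurd (hc.trans_eq hfj) (lt_irrefl j)
        have hexc := excA_ins σ j
        rw [if_neg hnl] at hexc
        have hcond : (fixA (ins σ j.castSucc) = i) ↔ (fixA σ = i + 1) := by omega
        rw [if_pos hfj]
        simp only [hpar σ j, hcond, hexc]
      · have hfix := fixA_ins σ j
        rw [if_neg hfj] at hfix
        have hcond : (fixA (ins σ j.castSucc) = i) ↔ (fixA σ = i) := by omega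
        rw [if_neg hfj]
        by_cases hlt : j < σ j
        · have hexc := excA_ins σ j
          rw [if_pos hlt] at hexc
          rw [if_pos hlt]
          simp only [hpar σ j, hcond, hexc]
        · have hexc := excA_ins σ j
          rw [if_neg hlt] at hexc
          rw [if_neg hlt]
          simp only [hpar σ j, hcond, hexc]
    · rw [ins_last, excA_ext, fixA_ext, invA_ext]
  have hS_last : ∑ σ : Perm (Fin n),
      (if ((Even (invA σ) ↔ b = true) ∧ fixA σ + 1 = i)
        then (X : Polynomial ℚ) ^ excA σ else 0)
      = (if i = 0 then 0 else P b n (i-1)) := by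
    cases i with
    | zero => simp
    | succ i' =>
      rw [if_neg (Nat.succ_ne_zero i'), P_def', Nat.succ_sub_one]
      apply Finset.sum_congr rfl
      intro σ _
      exact if_congr (and_congr Iff.rfl (by omega)) rfl rfl
  have hS_A : ∑ σ : Perm (Fin n),
      (fixA σ) • (if ((Even (invA σ) ↔ (!b) = true) ∧ fixA σ = i + 1)
        then (X : Polynomial ℚ) ^ (excA σ + 1) else 0)
      = C ((i : ℚ) + 1) * (X * P (!b) n (i+1)) := by
    rw [P_def', Finset.mul_sum, Finset.mul_sum]
    apply Finset.sum_congr rfl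
    intro σ _
    by_cases hc : ((Even (invA σ) ↔ (!b) = true) ∧ fixA σ = i + 1)
    · rw [if_pos hc, if_pos hc, hc.2, nsmul_eq_mul, pow_succ]
      simp only [map_add, map_one, Polynomial.C_eq_natCast]
      push_cast
      ring
    · rw [if_neg hc, if_neg hc, smul_zero, mul_zero, mul_zero]
  have hS_T : ∑ σ : Perm (Fin n),
      ((excA σ) • (if ((Even (invA σ) ↔ (!b) = true) ∧ fixA σ = i)
          then (X : Polynomial ℚ) ^ excA σ else 0)
        + (n - fixA σ - excA σ) • (if ((Even (invA σ) ↔ (!b) = true) ∧ fixA σ = i)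
          then (X : Polynomial ℚ) ^ (excA σ + 1) else 0))
      = Tm (n - i) (P (!b) n i) := by
    rw [P, Tm_sum, Finset.sum_filter]
    apply Finset.sum_congr rfl
    intro σ _
    by_cases hc : ((Even (invA σ) ↔ (!b) = true) ∧ fixA σ = i)
    · rw [if_pos hc, if_pos hc, if_pos hc]
      have he : excA σ ≤ n - i := by
        have := exc_add_fix_le σ
        omega
      rw [Tm_pow (n - i) (excA σ) he]
      have h2 : n - fixA σ - excA σ = n - i - excA σ := by omega
      rw [h2]
    · rw [if_neg hc, if_neg hc, if_neg hc, smul_zero, smul_zero, add_zero]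
  calc P b (n+1) i
      = ∑ σ : Perm (Fin n), ∑ k : Fin (n+1),
        (if ((Even (invA (ins σ k)) ↔ b = true) ∧ fixA (ins σ k) = i)
          then (X : Polynomial ℚ) ^ excA (ins σ k) else 0) := step1
    _ = ∑ σ : Perm (Fin n),
        (((fixA σ) • (if ((Even (invA σ) ↔ (!b) = true) ∧ fixA σ = i + 1)
            then (X : Polynomial ℚ) ^ (excA σ + 1) else 0)
          + ((excA σ) • (if ((Even (invA σ) ↔ (!b) = true) ∧ fixA σ = i)
              then (X : Polynomial ℚ) ^ excA σ else 0)
            + (n - fixA σ - excA σ) • (if ((Even (invA σ) ↔ (!b) = true) ∧ fixA σ = i)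
              then (X : Polynomial ℚ) ^ (excA σ + 1) else 0)))
          + (if ((Even (invA σ) ↔ b = true) ∧ fixA σ + 1 = i)
            then (X : Polynomial ℚ) ^ excA σ else 0)) := by
        apply Finset.sum_congr rfl
        intro σ _
        rw [step2 σ, sum_three]
        ring
    _ = (if i = 0 then 0 else P b n (i-1))
          + C ((i : ℚ) + 1) * (X * P (!b) n (i+1))
          + Tm (n - i) (P (!b) n i) := by
        rw [Finset.sum_add_distrib, Finset.sum_add_distrib, hS_last, hS_A, hS_T]
        ring

/-- The gamma-positivity invariant carried through the induction. -/
def Gam : Polynomial ℚ → ℕ → Prop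
  | f, 0 => ∃ c : ℚ, 0 ≤ c ∧ f = C c
  | f, 1 => f = 0
  | f, (m+2) => ∃ γ : ℕ → ℚ, (∀ j, 0 ≤ γ j) ∧ (∀ j, m/2 < j → γ j = 0) ∧
      f = ∑ j ∈ Finset.range (m/2 + 1), C (γ j) * X ^ (1 + j) * (1 + X) ^ (m - 2*j)

lemma Gam_zero (m : ℕ) : Gam 0 m := by
  match m with
  | 0 => exact ⟨0, le_refl 0, by simp⟩
  | 1 => rfl
  | (m+2) => exact ⟨fun _ => 0, fun _ => le_refl 0, fun _ _ => rfl, by simp⟩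

lemma Gam_add {f g : Polynomial ℚ} {m : ℕ} (hf : Gam f m) (hg : Gam g m) :
    Gam (f + g) m := by
  match m with
  | 0 =>
    obtain ⟨c, hc, rfl⟩ := hf
    obtain ⟨c', hc', rfl⟩ := hg
    exact ⟨c + c', add_nonneg hc hc', by rw [map_add]⟩
  | 1 =>
    have hf' : f = 0 := hf
    have hg' : g = 0 := hg
    show f + g = 0
    rw [hf', hg', add_zero]
  | (m+2) =>
    obtain ⟨γ, h1, h2, rfl⟩ := hf
    obtain ⟨γ', h1', h2', rfl⟩ := hg
    refine ⟨fun j => γ j + γ' j, fun j => add_nonneg (h1 j) (h1' j),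
      fun j hj => by show γ j + γ' j = 0; rw [h2 j hj, h2' j hj, add_zero], ?_⟩
    rw [← Finset.sum_add_distrib]
    apply Finset.sum_congr rfl
    intro j _
    rw [map_add, add_mul, add_mul]

lemma Gam_smulX {f : Polynomial ℚ} {m : ℕ} (c : ℚ) (hc : 0 ≤ c) (hf : Gam f m) :
    Gam (C c * (X * f)) (m + 2) := by
  match m with
  | 0 =>
    obtain ⟨c', hc', rfl⟩ := hf
    refine ⟨fun j => if j = 0 then c * c' else 0,
      fun j => by
        show 0 ≤ if j = 0 then c * c' else 0
        split_ifs; exacts [mul_nonneg hc hc', le_refl 0],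
      fun j hj => by
        show (if j = 0 then c * c' else 0) = 0
        rw [if_neg (by omega)], ?_⟩
    rw [Finset.sum_range_one]
    norm_num
    ring
  | 1 =>
    have hf' : f = 0 := hf
    rw [hf']
    simpa using Gam_zero 3
  | (m''+2) =>
    obtain ⟨γ, h1, h2, rfl⟩ := hf
    refine ⟨fun j => match j with | 0 => 0 | (jj+1) => c * γ jj,
      fun j => by cases j with
        | zero => exact le_refl 0
        | succ jj => exact mul_nonneg hc (h1 jj),
      fun j hj => by
        cases j with
        | zero => rfl
        | succ jj => exact mul_eq_zero_of_right c (h2 jj (by omega)), ?_⟩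
    have hK : (m''+2)/2 + 1 = (m''/2 + 1) + 1 := by omega
    conv_rhs => rw [hK, Finset.sum_range_succ']
    have h0 : C ((fun j => match j with | 0 => (0:ℚ) | (jj+1) => c * γ jj) 0)
        * X ^ (1 + 0) * (1 + X) ^ (m''+2 - 2*0) = 0 := by
      show C (0:ℚ) * X ^ (1 + 0) * (1 + X) ^ (m''+2 - 2*0) = 0
      simp
    rw [h0, add_zero, Finset.mul_sum, Finset.mul_sum]
    apply Finset.sum_congr rfl
    intro j _
    show C c * (X * (C (γ j) * X ^ (1 + j) * (1 + X) ^ (m'' - 2*j)))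
        = C (c * γ j) * X ^ (1 + (j+1)) * (1 + X) ^ (m''+2 - 2*(j+1))
    have he : (m''+2) - 2*(j+1) = m'' - 2*j := by omega
    have he2 : 1 + (j + 1) = (1 + j) + 1 := by omega
    rw [he, he2, pow_succ, map_mul]
    ring

lemma Tm_C_mul (m : ℕ) (c : ℚ) (g : Polynomial ℚ) : Tm m (C c * g) = C c * Tm m g := by
  simp only [Tm, derivative_C_mul]
  ring

lemma Tm_basis (m a b : ℕ) (ha : 1 ≤ a) (h : 2*a + b = m) :
    Tm m ((X : Polynomial ℚ)^a * (1+X)^b)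
      = C ((a : ℕ):ℚ) * ((X : Polynomial ℚ)^a * (1+X)^(b+1))
        + C ((2*b : ℕ):ℚ) * ((X : Polynomial ℚ)^(a+1) * (1+X)^(b-1)) := by
  obtain ⟨a', rfl⟩ : ∃ a', a = a' + 1 := ⟨a-1, by omega⟩
  subst h
  cases b with
  | zero =>
    rw [Tm]
    simp only [pow_zero, mul_one, derivative_X_pow, Nat.add_sub_cancel, mul_zero,
      Nat.cast_zero, map_zero, zero_mul, add_zero, pow_one, Nat.add_zero]
    simp only [Polynomial.C_eq_natCast]
    push_cast
    ring
  | succ b' =>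
    rw [Tm, derivative_mul, derivative_X_pow, derivative_pow]
    have hd : derivative (1 + X : Polynomial ℚ) = 1 := by simp
    rw [hd]
    simp only [Nat.add_sub_cancel, mul_one]
    simp only [Polynomial.C_eq_natCast]
    push_cast
    ring

lemma Gam_T {f : Polynomial ℚ} {m : ℕ} (hf : Gam f m) : Gam (Tm m f) (m + 1) := by
  match m with
  | 0 =>
    obtain ⟨c, _, rfl⟩ := hf
    show Tm 0 (C c) = 0
    simp [Tm]
  | 1 =>
    have hf' : f = 0 := hf
    rw [hf', Tm_zero]
    exact Gam_zero 2
  | (m''+2) =>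
    obtain ⟨γ, h1, h2, rfl⟩ := hf
    set K := m''/2 + 1 with hK
    set δ : ℕ → ℚ := fun j => match j with
      | 0 => 0
      | (jj+1) => 2*((m'' - 2*jj : ℕ):ℚ) * γ jj with hδ
    have hδpos : ∀ j, 0 ≤ δ j := by
      intro j
      cases j with
      | zero => exact le_refl 0
      | succ jj =>
        show 0 ≤ 2*((m'' - 2*jj : ℕ):ℚ) * γ jj
        exact mul_nonneg (mul_nonneg (by norm_num) (Nat.cast_nonneg _)) (h1 jj)
    have hδ0 : ∀ j, (m''+1)/2 < j → δ j = 0 := by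
      intro j hj
      cases j with
      | zero => omega
      | succ jj =>
        show 2*((m'' - 2*jj : ℕ):ℚ) * γ jj = 0
        by_cases hj2 : m''/2 < jj
        · rw [h2 jj hj2, mul_zero]
        · have hz : m'' - 2*jj = 0 := by omega
          rw [hz]
          norm_num
    have key : Tm (m''+2) (∑ j ∈ Finset.range K,
          C (γ j) * X ^ (1+j) * (1+X) ^ (m''-2*j))
        = ∑ j' ∈ Finset.range ((m''+1)/2 + 1),
            C (((1+j' : ℕ):ℚ) * γ j' + δ j') * X ^ (1+j') * (1+X) ^ ((m''+1)-2*j') := by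
      rw [Tm_sum]
      have hterm : ∀ j ∈ Finset.range K,
          Tm (m''+2) (C (γ j) * X ^ (1+j) * (1+X) ^ (m''-2*j))
            = C (((1+j : ℕ):ℚ) * γ j) * X ^ (1+j) * (1+X) ^ ((m''+1)-2*j)
              + C (δ (j+1)) * X ^ (1+(j+1)) * (1+X) ^ ((m''+1)-2*(j+1)) := by
        intro j hj
        have hjle : j ≤ m''/2 := by
          have := Finset.mem_range.1 hj
          omega
        have hb : 2*(1+j) + (m''-2*j) = m''+2 := by omega
        rw [mul_assoc, Tm_C_mul, Tm_basis (m''+2) (1+j) (m''-2*j) (by omega) hb]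
        have e1 : (m''-2*j) + 1 = (m''+1) - 2*j := by omega
        have e2 : (m''-2*j) - 1 = (m''+1) - 2*(j+1) := by omega
        have e3 : (1+j) + 1 = 1 + (j+1) := by omega
        have hδ1 : δ (j+1) = 2*((m'' - 2*j : ℕ):ℚ) * γ j := rfl
        rw [e1, e2, e3, mul_add, hδ1]
        push_cast [map_mul]
        ring
      rw [Finset.sum_congr rfl hterm, Finset.sum_add_distrib]
      have hsplit : ∑ j' ∈ Finset.range ((m''+1)/2 + 1),
            C (((1+j' : ℕ):ℚ) * γ j' + δ j') * X ^ (1+j') * (1+X) ^ ((m''+1)-2*j')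
          = (∑ j' ∈ Finset.range ((m''+1)/2 + 1),
              C (((1+j' : ℕ):ℚ) * γ j') * X ^ (1+j') * (1+X) ^ ((m''+1)-2*j'))
            + ∑ j' ∈ Finset.range ((m''+1)/2 + 1),
              C (δ j') * X ^ (1+j') * (1+X) ^ ((m''+1)-2*j') := by
        rw [← Finset.sum_add_distrib]
        apply Finset.sum_congr rfl
        intro j' _
        rw [map_add, add_mul, add_mul]
      rw [hsplit]
      congr 1
      · apply Finset.sum_subset (Finset.range_subset_range.2 (by omega : K ≤ (m''+1)/2 + 1))
        intro j hjR hjK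
        have hj2 : m''/2 < j := by
          have h3 : ¬ j < K := fun hc => hjK (Finset.mem_range.2 hc)
          omega
        rw [h2 j hj2, mul_zero, map_zero, zero_mul, zero_mul]
      · have hg : ∑ j ∈ Finset.range K, C (δ (j+1)) * X^(1+(j+1)) * (1+X)^((m''+1)-2*(j+1))
            = ∑ j' ∈ Finset.range (K+1), C (δ j') * X^(1+j') * (1+X)^((m''+1)-2*j') := by
          conv_rhs => rw [Finset.sum_range_succ']
          have hz : C (δ 0) * X^(1+0) * (1+X)^((m''+1)-2*0) = 0 := by
            show C (0:ℚ) * X^(1+0) * (1+X)^((m''+1)-2*0) = 0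
            simp
          rw [hz, add_zero]
        rw [hg]
        refine (Finset.sum_subset (Finset.range_subset_range.2 (by omega : (m''+1)/2 + 1 ≤ K+1)) ?_).symm
        intro j hjK1 hjR
        have hj2 : (m''+1)/2 < j := by
          have h3 : ¬ j < (m''+1)/2 + 1 := fun hc => hjR (Finset.mem_range.2 hc)
          omega
        rw [hδ0 j hj2, map_zero, zero_mul, zero_mul]
    exact ⟨fun j => ((1+j : ℕ):ℚ) * γ j + δ j,
      fun j => add_nonneg (mul_nonneg (Nat.cast_nonneg _) (h1 j)) (hδpos j),
      fun j hj => by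
        show ((1+j : ℕ):ℚ) * γ j + δ j = 0
        rw [h2 j (by omega), hδ0 j hj, mul_zero, add_zero],
      key⟩

lemma Gam_final {f : Polynomial ℚ} {m : ℕ} (h : Gam f m) : GammaPosCenter f m := by
  match m with
  | 0 =>
    obtain ⟨c, hc, rfl⟩ := h
    exact ⟨0, 0, rfl, le_refl 0, fun _ => c, fun _ => hc, by simp⟩
  | 1 =>
    have h' : f = 0 := h
    refine ⟨0, 1, rfl, zero_le_one, fun _ => 0, fun _ => le_refl 0, ?_⟩
    rw [h']
    simp
  | (m''+2) =>
    obtain ⟨γ, h1, h2, rfl⟩ := h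
    refine ⟨1, m''+1, by omega, by omega, γ, h1, ?_⟩
    have hr : (m''+1-1)/2 + 1 = m''/2 + 1 := by omega
    rw [hr]
    apply Finset.sum_congr rfl
    intro j _
    have he : m''+1-1-2*j = m'' - 2*j := by omega
    rw [he]

lemma main : ∀ N : ℕ, ∀ (b : Bool) (i : ℕ), Gam (P b N i) (N - i) := by
  intro N
  induction N with
  | zero =>
    intro b i
    have hinv : ∀ π : Perm (Fin 0), invA π = 0 := fun π => by
      simp [invA, Finset.univ_eq_empty]
    have hfix : ∀ π : Perm (Fin 0), fixA π = 0 := fun π => by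
      simp [fixA, Finset.univ_eq_empty]
    have hexc : ∀ π : Perm (Fin 0), excA π = 0 := fun π => by
      simp [excA, Finset.univ_eq_empty]
    by_cases hcase : b = true ∧ i = 0
    · obtain ⟨rfl, rfl⟩ := hcase
      have hfil : (Finset.univ.filter
          (fun π : Perm (Fin 0) => (Even (invA π) ↔ true = true) ∧ fixA π = 0))
          = Finset.univ := by
        apply Finset.filter_true_of_mem
        intro π _
        exact ⟨by simp [hinv π], hfix π⟩
      show Gam (P true 0 0) (0 - 0)
      rw [P, hfil]
      have hone : ∑ π : Perm (Fin 0), (X : Polynomial ℚ) ^ excA π = 1 := by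
        rw [Finset.sum_congr rfl (fun π _ => by rw [hexc π, pow_zero])]
        rw [Finset.sum_const, Finset.card_univ]
        simp [Fintype.card_perm]
      rw [hone]
      exact ⟨1, zero_le_one, (map_one C).symm⟩
    · have hfil : (Finset.univ.filter
          (fun π : Perm (Fin 0) => (Even (invA π) ↔ b = true) ∧ fixA π = i)) = ∅ := by
        apply Finset.filter_false_of_mem
        intro π _
        rintro ⟨hc1, hc2⟩
        apply hcase
        constructor
        · rw [← hc1, hinv π]
          exact Even.zero
        · rw [← hc2, hfix π]
      have hz : P b 0 i = 0 := by rw [P, hfil, Finset.sum_empty]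
      rw [hz]
      exact Gam_zero _
  | succ n IH =>
    intro b i
    rw [P_rec]
    have hA : Gam (if i = 0 then 0 else P b n (i-1)) ((n+1) - i) := by
      rcases Nat.eq_zero_or_pos i with rfl | hi
      · rw [if_pos rfl]; exact Gam_zero _
      · rw [if_neg (by omega)]
        have h := IH b (i-1)
        rwa [show n - (i-1) = n + 1 - i from by omega] at h
    have hB : Gam (C ((i:ℚ)+1) * (X * P (!b) n (i+1))) ((n+1) - i) := by
      rcases le_or_gt (i+1) n with h | h
      · have h2 := Gam_smulX ((i:ℚ)+1) (by positivity) (IH (!b) (i+1))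
        rwa [show (n - (i+1)) + 2 = n + 1 - i from by omega] at h2
      · rw [P_eq_zero h, mul_zero, mul_zero]
        exact Gam_zero _
    have hC : Gam (Tm (n - i) (P (!b) n i)) ((n+1) - i) := by
      rcases le_or_gt i n with h | h
      · have h2 := Gam_T (IH (!b) i)
        rwa [show (n - i) + 1 = n + 1 - i from by omega] at h2
      · rw [P_eq_zero h, Tm_zero]
        exact Gam_zero _
    exact Gam_add (Gam_add hA hB) hC


end Aux19

theorem stmt19 (n i : ℕ) (hn : 1 ≤ n) (hi : i ≤ n) :
    GammaPosCenter
      (∑ π ∈ Finset.univ.filter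
          (fun π : Equiv.Perm (Fin n) => Even (invA π) ∧ fixA π = i),
        (Polynomial.X : Polynomial ℚ) ^ excA π) (n - i) ∧
    GammaPosCenter
      (∑ π ∈ Finset.univ.filter
          (fun π : Equiv.Perm (Fin n) => ¬ Even (invA π) ∧ fixA π = i),
        (Polynomial.X : Polynomial ℚ) ^ excA π) (n - i) := by
  constructor
  · have h1 : (Finset.univ.filter
        (fun π : Equiv.Perm (Fin n) => Even (invA π) ∧ fixA π = i))
        = (Finset.univ.filter
          (fun π : Equiv.Perm (Fin n) => (Even (invA π) ↔ (true : Bool) = true) ∧ fixA π = i)) :=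
      Finset.filter_congr (fun π _ => by simp)
    rw [h1]
    exact Aux19.Gam_final (Aux19.main n true i)
  · have h1 : (Finset.univ.filter
        (fun π : Equiv.Perm (Fin n) => ¬ Even (invA π) ∧ fixA π = i))
        = (Finset.univ.filter
          (fun π : Equiv.Perm (Fin n) => (Even (invA π) ↔ (false : Bool) = true) ∧ fixA π = i)) :=
      Finset.filter_congr (fun π _ => by simp)
    rw [h1]
    exact Aux19.Gam_final (Aux19.main n false i)
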